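/- Let α = (α₁,α₂,α₃) be a real 3-vector with α₁ ≥ α₂ ≥ |α₃| and α₁ > 0. Then inf{ t ≥ 0 : t·α ≻_s (π/4, π/4, 0) } = (π/2)/(α₁ + α₂ − |α₃|), and the infimum is attained. (Interaction cost of the DCNOT gate, whose interaction content is (π/4, π/4, 0).) -/

import Mathlib

open Matrix Complex Real NormedSpace

noncomputable section

/-- Pauli matrix `σ₁`. -/
def σ1 : Matrix (Fin 2) (Fin 2) ℂ := !![0, 1; 1, 0]
/-- Pauli matrix `σ₂`. -/
def σ2 : Matrix (Fin 2) (Fin 2) ℂ := !![0, -I; I, 0]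
/-- Pauli matrix `σ₃`. -/
def σ3 : Matrix (Fin 2) (Fin 2) ℂ := !![1, 0; 0, -1]

/-- Kronecker product of two `2×2` matrices as a `4×4` matrix, with the index ordering
`|00⟩,|01⟩,|10⟩,|11⟩` (i.e. index `2*i+j` corresponds to `|i⟩⊗|j⟩`). -/
def kron (A B : Matrix (Fin 2) (Fin 2) ℂ) : Matrix (Fin 4) (Fin 4) ℂ :=
  Matrix.of fun i j =>
    A ⟨i.val / 2, by have := i.isLt; omega⟩ ⟨j.val / 2, by have := j.isLt; omega⟩ *
      B ⟨i.val % 2, by have := i.isLt; omega⟩ ⟨j.val % 2, by have := j.isLt; omega⟩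

/-- The Hamiltonian `H_α = α₁ σ₁⊗σ₁ + α₂ σ₂⊗σ₂ + α₃ σ₃⊗σ₃`. -/
def Hmat (a : Fin 3 → ℝ) : Matrix (Fin 4) (Fin 4) ℂ :=
  (a 0 : ℂ) • kron σ1 σ1 + (a 1 : ℂ) • kron σ2 σ2 + (a 2 : ℂ) • kron σ3 σ3

/-- The magic basis matrix: column `j` is the `j`-th magic basis vector, written in the
computational basis `|00⟩,|01⟩,|10⟩,|11⟩`. -/
def Mmag : Matrix (Fin 4) (Fin 4) ℂ :=
  !![0,                      1 / (Real.sqrt 2 : ℂ), -I / (Real.sqrt 2 : ℂ), 0;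
     -I / (Real.sqrt 2 : ℂ), 0,                     0,                      1 / (Real.sqrt 2 : ℂ);
     -I / (Real.sqrt 2 : ℂ), 0,                     0,                      -(1 / (Real.sqrt 2 : ℂ));
     0,                      1 / (Real.sqrt 2 : ℂ), I / (Real.sqrt 2 : ℂ),  0]

/-- `λ(α) = (α₁+α₂−α₃, α₁−α₂+α₃, −α₁+α₂+α₃, −α₁−α₂−α₃)`, the vector of eigenvalues of `H_α`
in the magic basis. -/
def lamv (a : Fin 3 → ℝ) : Fin 4 → ℝ :=
  ![a 0 + a 1 - a 2, a 0 - a 1 + a 2, -a 0 + a 1 + a 2, -a 0 - a 1 - a 2]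

/-- The s-ordered form of a real 3-vector: the absolute values rearranged in nonincreasing
order, with the third component carrying the sign of the product `v₀v₁v₂`. -/
def sOrd (v : Fin 3 → ℝ) : Fin 3 → ℝ :=
  ![max |v 0| (max |v 1| |v 2|),
    |v 0| + |v 1| + |v 2| - max |v 0| (max |v 1| |v 2|) - min |v 0| (min |v 1| |v 2|),
    if v 0 * v 1 * v 2 < 0 then -(min |v 0| (min |v 1| |v 2|))
    else min |v 0| (min |v 1| |v 2|)]

/-- `x` s-majorizes `y`, written for the s-ordered forms:
`x^s₁ ≥ y^s₁`, `x^s₁+x^s₂−x^s₃ ≥ y^s₁+y^s₂−y^s₃` and `x^s₁+x^s₂+x^s₃ ≥ y^s₁+y^s₂+y^s₃`. -/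
def sMaj (x y : Fin 3 → ℝ) : Prop :=
  sOrd y 0 ≤ sOrd x 0 ∧
    sOrd y 0 + sOrd y 1 - sOrd y 2 ≤ sOrd x 0 + sOrd x 1 - sOrd x 2 ∧
    sOrd y 0 + sOrd y 1 + sOrd y 2 ≤ sOrd x 0 + sOrd x 1 + sOrd x 2

theorem stmt13 (α : Fin 3 → ℝ)
    (ha1 : α 1 ≤ α 0) (ha2 : |α 2| ≤ α 1) (ha0 : 0 < α 0) :
    IsLeast { t : ℝ | 0 ≤ t ∧ sMaj (t • α) ![π / 4, π / 4, 0] }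
      (π / 2 / (α 0 + α 1 - |α 2|)) := by
  have hpi : (0:ℝ) < π := Real.pi_pos
  have hC : (0:ℝ) ≤ |α 2| := abs_nonneg _
  have hB : (0:ℝ) ≤ α 1 := le_trans hC ha2
  have hD : (0:ℝ) < α 0 + α 1 - |α 2| := by linarith
  have key : ∀ t : ℝ, 0 ≤ t →
      (sMaj (t • α) ![π / 4, π / 4, 0] ↔ π / 2 ≤ t * (α 0 + α 1 - |α 2|)) := by
    intro t ht
    have e0 : |t * α 0| = t * α 0 := abs_of_nonneg (mul_nonneg ht ha0.le)
    have e1 : |t * α 1| = t * α 1 := abs_of_nonneg (mul_nonneg ht hB)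
    have e2 : |t * α 2| = t * |α 2| := by rw [abs_mul, _root_.abs_of_nonneg ht]
    have h21 : t * |α 2| ≤ t * α 1 := mul_le_mul_of_nonneg_left ha2 ht
    have h10 : t * α 1 ≤ t * α 0 := mul_le_mul_of_nonneg_left ha1 ht
    have hmax : max |t * α 0| (max |t * α 1| |t * α 2|) = t * α 0 := by
      rw [e0, e1, e2, max_eq_left h21, max_eq_left h10]
    have hmin : min |t * α 0| (min |t * α 1| |t * α 2|) = t * |α 2| := by
      rw [e0, e1, e2, min_eq_right h21, min_eq_right (le_trans h21 h10)]
    have hq : (0:ℝ) ≤ π / 4 := by positivity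
    have hb0 : sOrd ![π / 4, π / 4, 0] 0 = π / 4 := by
      simp [sOrd, _root_.abs_of_nonneg hq, max_eq_left hq, min_eq_right hq]
    have hb1 : sOrd ![π / 4, π / 4, 0] 1 = π / 4 := by
      simp [sOrd, _root_.abs_of_nonneg hq, max_eq_left hq, min_eq_right hq]
    have hb2 : sOrd ![π / 4, π / 4, 0] 2 = 0 := by
      simp [sOrd]
    have hx0 : sOrd (t • α) 0 = t * α 0 := by
      simpa [sOrd, Pi.smul_apply, smul_eq_mul] using hmax
    have hx1 : sOrd (t • α) 1 = t * α 1 := by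
      simp only [sOrd, Pi.smul_apply, smul_eq_mul, Matrix.cons_val_one, Matrix.head_cons, Matrix.cons_val_zero]
      rw [hmax, hmin, e0, e1, e2]; ring
    have hx2 : sOrd (t • α) 2 = if t * α 0 * (t * α 1) * (t * α 2) < 0
        then -(t * |α 2|) else t * |α 2| := by
      simp only [sOrd, Pi.smul_apply, smul_eq_mul, Matrix.cons_val_two, Matrix.tail_cons, Matrix.head_cons]
      rw [hmin]
    unfold sMaj
    rw [hb0, hb1, hb2, hx0, hx1, hx2]
    have htC : 0 ≤ t * |α 2| := mul_nonneg ht hC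
    have hrng : t * (α 0 + α 1 - |α 2|) = t * α 0 + t * α 1 - t * |α 2| := by ring
    by_cases hneg : t * α 0 * (t * α 1) * (t * α 2) < 0
    · rw [if_pos hneg]
      constructor
      · rintro ⟨h1, h2, h3⟩
        linarith [hrng, h3]
      · intro h
        have h' : π / 2 ≤ t * α 0 + t * α 1 - t * |α 2| := by linarith [hrng, h]
        exact ⟨by linarith, by linarith, by linarith⟩
    · rw [if_neg hneg]
      constructor
      · rintro ⟨h1, h2, h3⟩
        linarith [hrng, h2]
      · intro h
        have h' : π / 2 ≤ t * α 0 + t * α 1 - t * |α 2| := by linarith [hrng, h]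
        exact ⟨by linarith, by linarith, by linarith⟩
  constructor
  · refine ⟨le_of_lt (div_pos (by positivity) hD), (key _ (le_of_lt (div_pos (by positivity) hD))).2 ?_⟩
    rw [div_mul_cancel₀]
    exact hD.ne'
  · rintro t ⟨ht, hs⟩
    have h := (key t ht).1 hs
    rw [div_le_iff₀ hD]
    linarith
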